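/- For every n ≥ 1 and every m ≥ 1, the number R_{n,m} of functions f : Fin n → Fin n with exactly m ascending runs equals n^{\underline m} · S(n,m) = (n!/(n−m)!) · S(n,m), the falling factorial n(n−1)⋯(n−m+1) times the Stirling number of the second kind S(n,m). -/

import Mathlib

/-- The number of ascending runs of `f`: the number of elements `j` that are the
start of an ascending run, i.e. every preimage `i` of `j` satisfies `j ≤ i`. -/
def numRuns {n : ℕ} (f : Fin n → Fin n) : ℕ :=
  (Finset.univ.filter (fun j : Fin n => ∀ i : Fin n, f i = j → j ≤ i)).card

/-- `R_{n,m}`: the number of functions on `Fin n` with exactly `m` ascending runs. -/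
noncomputable def mappingRunCount (n m : ℕ) : ℕ :=
  Nat.card {f : Fin n → Fin n // numRuns f = m}

/-- The Stirling number of the second kind `S(n,m)`: the number of partitions of
an `n`-element set into `m` nonempty blocks. -/
noncomputable def stirlingSecond (n m : ℕ) : ℕ :=
  Nat.card {P : Finpartition (Finset.univ : Finset (Fin n)) // P.parts.card = m}

namespace RunsAux

open Finset


/-- Exactness condition: for `f : Fin p → Fin n`, every value `a ∈ A` is *not* hit from a
position strictly below it, and every value `b < k` outside `A` *is* hit from below. -/
def RunCond (p n k : ℕ) (A : Finset ℕ) (f : Fin p → Fin n) : Prop :=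
  (∀ (i : Fin p), ∀ a ∈ A, (i : ℕ) < a → (f i : ℕ) ≠ a) ∧
  (∀ b : ℕ, b < k → b ∉ A → ∃ i : Fin p, (i : ℕ) < b ∧ (f i : ℕ) = b)

noncomputable def Mcount (p n k : ℕ) (A : Finset ℕ) : ℕ :=
  Nat.card {f : Fin p → Fin n // RunCond p n k A f}

def wfact (n k : ℕ) (A : Finset ℕ) (i : ℕ) : ℕ :=
  if i < k ∧ i ∉ A then (A.filter (· < i)).card else n - (A.filter (i < ·)).card

lemma ncard_subtype {α : Type*} [Fintype α] (P : α → Prop) [DecidablePred P] :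
    Nat.card {x // P x} = ((univ : Finset α).filter P).card := by
  rw [Nat.card_eq_fintype_card, Fintype.card_subtype]

lemma ncard_split {α : Type*} [Fintype α] (P Q : α → Prop) :
    Nat.card {x // P x} = Nat.card {x // P x ∧ Q x} + Nat.card {x // P x ∧ ¬ Q x} := by
  classical
  simp only [ncard_subtype]
  rw [← card_filter_add_card_filter_not (s := (univ : Finset α).filter P) Q,
    filter_filter, filter_filter]

/-- split a product-subtype on the second component -/
def prodSub {β γ : Type*} (Q : γ → Prop) : {x : β × γ // Q x.2} ≃ β × {c : γ // Q c} :=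
  ⟨fun x => (x.1.1, ⟨x.1.2, x.2⟩), fun y => ⟨(y.1, y.2.1), y.2.2⟩, fun _ => rfl, fun _ => rfl⟩

lemma runCond_castSucc_iff (p n k : ℕ) (A : Finset ℕ) (hA : A ⊆ range k) (hk : k ≤ p)
    (f : Fin (p+1) → Fin n) :
    RunCond (p+1) n k A f ↔ RunCond p n k A (fun i => f i.castSucc) := by
  constructor
  · rintro ⟨h1, h2⟩
    refine ⟨fun i a ha hia => h1 i.castSucc a ha (by simpa using hia), fun b hb hbA => ?_⟩
    obtain ⟨i, hib, hfi⟩ := h2 b hb hbA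
    have hip : (i : ℕ) < p := lt_of_lt_of_le (hib.trans hb) hk
    refine ⟨⟨(i : ℕ), hip⟩, hib, ?_⟩
    have he : (⟨(i : ℕ), hip⟩ : Fin p).castSucc = i := by
      apply Fin.ext; simp
    simpa [he] using hfi
  · rintro ⟨h1, h2⟩
    constructor
    · intro i a ha hia
      have hak : a < k := mem_range.1 (hA ha)
      have hip : (i : ℕ) < p := lt_of_lt_of_le (hia.trans hak) hk
      have := h1 ⟨(i : ℕ), hip⟩ a ha hia
      have he : (⟨(i : ℕ), hip⟩ : Fin p).castSucc = i := by
        apply Fin.ext; simp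
      simpa [he] using this
    · intro b hb hbA
      obtain ⟨i, hib, hfi⟩ := h2 b hb hbA
      exact ⟨i.castSucc, by simpa using hib, hfi⟩

lemma Mcount_succ_free (p n k : ℕ) (A : Finset ℕ) (hA : A ⊆ range k) (hk : k ≤ p) :
    Mcount (p+1) n k A = n * Mcount p n k A := by
  have e2 : {f : Fin (p+1) → Fin n // RunCond (p+1) n k A f} ≃
      {x : Fin n × (Fin p → Fin n) // RunCond p n k A x.2} :=
    Equiv.subtypeEquiv (Fin.snocEquiv (fun _ => Fin n)).symm (by
      intro f
      exact runCond_castSucc_iff p n k A hA hk f)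
  have e3 := e2.trans (prodSub (RunCond p n k A))
  rw [Mcount, Nat.card_congr e3, Nat.card_prod, Nat.card_eq_fintype_card, Fintype.card_fin]
  rfl
def QQ (p n : ℕ) (A : Finset ℕ) (g : Fin p → Fin n) : Prop :=
  RunCond p n p (A.erase p) g ∧ ∀ i, (g i : ℕ) ≠ p

lemma runCond_top_good_iff (p n : ℕ) (A : Finset ℕ) (hA : A ⊆ range (p+1)) (hp : p ∈ A)
    (f : Fin (p+1) → Fin n) :
    RunCond (p+1) n (p+1) A f ↔ QQ p n A (fun i => f i.castSucc) := by
  constructor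
  · rintro ⟨h1, h2⟩
    refine ⟨⟨fun i a ha hia => h1 i.castSucc a (mem_of_mem_erase ha) (by simpa using hia),
      fun b hb hbA => ?_⟩, fun i => h1 i.castSucc p hp (by simpa using i.isLt)⟩
    have hbA' : b ∉ A := fun hbin => hbA (mem_erase.2 ⟨Nat.ne_of_lt hb, hbin⟩)
    obtain ⟨i, hib, hfi⟩ := h2 b (hb.trans (Nat.lt_succ_self p)) hbA'
    have hip : (i : ℕ) < p := hib.trans hb
    refine ⟨⟨(i : ℕ), hip⟩, hib, ?_⟩
    have he : (⟨(i : ℕ), hip⟩ : Fin p).castSucc = i := by apply Fin.ext; simp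
    simpa [he] using hfi
  · rintro ⟨⟨h1, h2⟩, h3⟩
    constructor
    · intro i a ha hia
      have hap : a < p + 1 := mem_range.1 (hA ha)
      have hip : (i : ℕ) < p := lt_of_lt_of_le hia (Nat.lt_succ_iff.1 hap)
      have he : (⟨(i : ℕ), hip⟩ : Fin p).castSucc = i := by apply Fin.ext; simp
      rcases eq_or_ne a p with rfl | hne
      · have := h3 ⟨(i : ℕ), hip⟩
        simpa [he] using this
      · have := h1 ⟨(i : ℕ), hip⟩ a (mem_erase.2 ⟨hne, ha⟩) hia
        simpa [he] using this
    · intro b hb hbA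
      have hbp : b ≠ p := fun h => hbA (h ▸ hp)
      have hb' : b < p := lt_of_le_of_ne (Nat.lt_succ_iff.1 hb) hbp
      obtain ⟨i, hib, hfi⟩ := h2 b hb' (fun h => hbA (mem_of_mem_erase h))
      exact ⟨i.castSucc, by simpa using hib, hfi⟩

lemma dval_eq_iff {v a p : ℕ} (hv : v ≠ p) (ha : a < p) :
    ((if v < p then v else v - 1) = a) ↔ v = a := by split <;> omega

lemma uval_eq_iff {u a p : ℕ} (ha : a < p) :
    ((if u < p then u else u + 1) = a) ↔ u = a := by split <;> omega

def shiftEquiv (p n : ℕ) (A : Finset ℕ) (hA : A ⊆ range (p+1)) (hn : p < n) :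
    {g : Fin p → Fin n // QQ p n A g} ≃
      {h : Fin p → Fin (n-1) // RunCond p (n-1) p (A.erase p) h} where
  toFun := fun ⟨g, hg⟩ => ⟨fun i => ⟨if (g i : ℕ) < p then (g i : ℕ) else (g i : ℕ) - 1,
      by have h1 := (g i).isLt; have h2 := hg.2 i; split <;> omega⟩, by
    have key : ∀ (i : Fin p) (a : ℕ), a < p →
        (((if (g i : ℕ) < p then (g i : ℕ) else (g i : ℕ) - 1) = a) ↔ (g i : ℕ) = a) :=
      fun i a ha => dval_eq_iff (hg.2 i) ha
    constructor
    · intro i a ha hia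
      have hap : a < p := by
        have := mem_range.1 (hA (mem_of_mem_erase ha))
        have := (mem_erase.1 ha).1
        omega
      simpa [key i a hap] using hg.1.1 i a ha hia
    · intro b hb hbA
      obtain ⟨i, hib, hfi⟩ := hg.1.2 b hb hbA
      exact ⟨i, hib, by simpa [key i b hb] using hfi⟩⟩
  invFun := fun ⟨h, hh⟩ => ⟨fun i => ⟨if (h i : ℕ) < p then (h i : ℕ) else (h i : ℕ) + 1,
      by have h1 := (h i).isLt; split <;> omega⟩, by
    have key : ∀ (i : Fin p) (a : ℕ), a < p →
        (((if (h i : ℕ) < p then (h i : ℕ) else (h i : ℕ) + 1) = a) ↔ (h i : ℕ) = a) :=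
      fun i a ha => uval_eq_iff ha
    refine ⟨⟨fun i a ha hia => ?_, fun b hb hbA => ?_⟩, fun i => ?_⟩
    · have hap : a < p := by
        have := mem_range.1 (hA (mem_of_mem_erase ha))
        have := (mem_erase.1 ha).1
        omega
      simpa [key i a hap] using hh.1 i a ha hia
    · obtain ⟨i, hib, hfi⟩ := hh.2 b hb hbA
      exact ⟨i, hib, by simpa [key i b hb] using hfi⟩
    · simp only
      split <;> omega⟩
  left_inv := fun ⟨g, hg⟩ => by
    apply Subtype.ext
    funext i
    apply Fin.ext
    simp only
    have h1 := (g i).isLt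
    have h2 := hg.2 i
    split_ifs <;> omega
  right_inv := fun ⟨h, hh⟩ => by
    apply Subtype.ext
    funext i
    apply Fin.ext
    simp only
    have h1 := (h i).isLt
    split_ifs <;> omega

lemma Mcount_succ_top_good (p n : ℕ) (A : Finset ℕ) (hA : A ⊆ range (p+1)) (hp : p ∈ A)
    (hn : p < n) :
    Mcount (p+1) n (p+1) A = n * Mcount p (n-1) p (A.erase p) := by
  have e2 : {f : Fin (p+1) → Fin n // RunCond (p+1) n (p+1) A f} ≃
      {x : Fin n × (Fin p → Fin n) // QQ p n A x.2} :=
    Equiv.subtypeEquiv (Fin.snocEquiv (fun _ => Fin n)).symm (by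
      intro f
      exact runCond_top_good_iff p n A hA hp f)
  have e3 := (e2.trans (prodSub (QQ p n A))).trans
    (Equiv.prodCongrRight (fun _ => shiftEquiv p n A hA hn))
  rw [Mcount, Nat.card_congr e3, Nat.card_prod, Nat.card_eq_fintype_card, Fintype.card_fin]
  rfl


lemma Mcount_split (p n : ℕ) (A : Finset ℕ) (hp : p ∉ A) :
    Mcount (p+1) n p A = Mcount (p+1) n (p+1) (insert p A) + Mcount (p+1) n (p+1) A := by
  classical
  have h := ncard_split (RunCond (p+1) n p A)
    (fun f : Fin (p+1) → Fin n => ∀ i : Fin (p+1), (i : ℕ) < p → (f i : ℕ) ≠ p)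
  rw [Mcount, h]
  congr 1
  · apply Nat.card_congr
    apply Equiv.subtypeEquivRight
    intro f
    constructor
    · rintro ⟨⟨h1, h2⟩, hq⟩
      constructor
      · intro i a ha hia
        rcases mem_insert.1 ha with rfl | haA
        · exact hq i hia
        · exact h1 i a haA hia
      · intro b hb hbA
        have hbp : b ≠ p := fun h => hbA (h ▸ mem_insert_self p A)
        have hb' : b < p := lt_of_le_of_ne (Nat.lt_succ_iff.1 hb) hbp
        exact h2 b hb' (fun h => hbA (mem_insert_of_mem h))
    · rintro ⟨h1, h2⟩
      constructor
      · constructor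
        · intro i a ha hia
          exact h1 i a (mem_insert_of_mem ha) hia
        · intro b hb hbA
          have hb2 : b ∉ insert p A := by
            intro h
            rcases mem_insert.1 h with h'' | h'
            · exact absurd (h'' ▸ hb) (lt_irrefl p)
            · exact hbA h'
          exact h2 b (hb.trans (Nat.lt_succ_self p)) hb2
      · intro i hi
        exact h1 i p (mem_insert_self p A) hi
  · apply Nat.card_congr
    apply Equiv.subtypeEquivRight
    intro f
    constructor
    · rintro ⟨⟨h1, h2⟩, hq⟩
      push_neg at hq
      obtain ⟨i, hip, hfi⟩ := hq
      refine ⟨h1, fun b hb hbA => ?_⟩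
      rcases Nat.lt_succ_iff_lt_or_eq.1 hb with hb' | rfl
      · exact h2 b hb' hbA
      · exact ⟨i, hip, hfi⟩
    · rintro ⟨h1, h2⟩
      refine ⟨⟨h1, fun b hb hbA => h2 b (hb.trans (Nat.lt_succ_self p)) hbA⟩, ?_⟩
      intro hq
      obtain ⟨i, hip, hfi⟩ := h2 p (Nat.lt_succ_self p) hp
      exact hq i hip hfi

lemma desc_helper (n : ℕ) : ∀ m : ℕ, m ≤ n → n * (n-1).descFactorial m = (n - m) * n.descFactorial m := by
  intro m
  induction m with
  | zero => simp
  | succ m ih =>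
    intro h
    have hm : m ≤ n := Nat.le_of_succ_le h
    rw [Nat.descFactorial_succ, Nat.descFactorial_succ,
      show n - 1 - m = n - (m+1) by omega]
    calc n * ((n - (m+1)) * (n-1).descFactorial m)
        = (n - (m+1)) * (n * (n-1).descFactorial m) := by ring
      _ = (n - (m+1)) * ((n - m) * n.descFactorial m) := by rw [ih hm]

lemma goodProd (n : ℕ) (A : Finset ℕ) :
    ∏ a ∈ A, (n - (A.filter (a < ·)).card) = n.descFactorial A.card := by
  induction A using Finset.induction_on_min with
  | empty => simp
  | insert a s hlt ih =>
    have ha : a ∉ s := fun h => lt_irrefl a (hlt a h)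
    rw [prod_insert ha]
    have h1 : (insert a s).filter (a < ·) = s := by
      ext x
      simp only [mem_filter, mem_insert]
      constructor
      · rintro ⟨rfl | hx, hax⟩
        · omega
        · exact hx
      · intro hx
        exact ⟨Or.inr hx, hlt x hx⟩
    have h2 : ∀ x ∈ s, (insert a s).filter (x < ·) = s.filter (x < ·) := by
      intro x hx
      rw [filter_insert, if_neg (by have := hlt x hx; omega)]
    rw [h1]
    rw [prod_congr rfl (fun x hx => by rw [h2 x hx])]
    rw [ih, card_insert_of_notMem ha, Nat.descFactorial_succ]

lemma wfact_of_mem (n k : ℕ) (A : Finset ℕ) (i : ℕ) (hi : i ∈ A) :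
    wfact n k A i = n - (A.filter (i < ·)).card := by
  rw [wfact, if_neg]
  rintro ⟨-, h⟩
  exact h hi

lemma wfact_top_free (n k p : ℕ) (A : Finset ℕ) (hA : A ⊆ range k) (hk : k ≤ p) :
    wfact n k A p = n := by
  rw [wfact, if_neg, filter_false_of_mem, card_empty, Nat.sub_zero]
  · intro x hx
    have := mem_range.1 (hA hx)
    omega
  · rintro ⟨h1, -⟩
    omega

lemma wfact_top_good (p n : ℕ) (A : Finset ℕ) (hA : A ⊆ range (p+1)) (hp : p ∈ A) :
    wfact n (p+1) A p = n := by
  rw [wfact_of_mem n (p+1) A p hp, filter_false_of_mem, card_empty, Nat.sub_zero]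
  intro x hx
  have := mem_range.1 (hA hx)
  omega

lemma wfact_lt_agree (n p : ℕ) (A : Finset ℕ) (i : ℕ) (hi : i < p) :
    wfact n (p+1) A i = wfact n p A i := by
  by_cases hiA : i ∈ A <;>
    simp [wfact, hi, Nat.lt_succ_of_lt hi, hiA]

lemma wfact_goodcase (p n : ℕ) (A : Finset ℕ) (hA : A ⊆ range (p+1)) (hp : p ∈ A)
    (i : ℕ) (hi : i < p) :
    wfact n (p+1) A i = wfact (n-1) p (A.erase p) i := by
  by_cases hiA : i ∈ A
  · have hie : i ∈ A.erase p := mem_erase.2 ⟨Nat.ne_of_lt hi, hiA⟩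
    rw [wfact_of_mem n (p+1) A i hiA, wfact_of_mem (n-1) p (A.erase p) i hie]
    have hsplit : A.filter (i < ·) = insert p ((A.erase p).filter (i < ·)) := by
      ext x
      simp only [mem_filter, mem_insert, mem_erase]
      constructor
      · rintro ⟨hxA, hix⟩
        rcases eq_or_ne x p with rfl | hne
        · exact Or.inl rfl
        · exact Or.inr ⟨⟨hne, hxA⟩, hix⟩
      · rintro (rfl | ⟨⟨-, hxA⟩, hix⟩)
        · exact ⟨hp, hi⟩
        · exact ⟨hxA, hix⟩
    rw [hsplit, card_insert_of_notMem (by simp), ]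
    omega
  · have hie : i ∉ A.erase p := fun h => hiA (mem_of_mem_erase h)
    rw [wfact, if_pos ⟨Nat.lt_succ_of_lt hi, hiA⟩, wfact, if_pos ⟨hi, hie⟩]
    congr 1
    ext x
    simp only [mem_filter, mem_erase]
    constructor
    · rintro ⟨hxA, hxi⟩
      exact ⟨⟨by omega, hxA⟩, hxi⟩
    · rintro ⟨⟨-, hxA⟩, hxi⟩
      exact ⟨hxA, hxi⟩

lemma wfact_final (p n : ℕ) (A : Finset ℕ) (hA : A ⊆ range p) (hp : p ∉ A) :
    wfact n (p+1) A p = A.card := by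
  rw [wfact, if_pos ⟨Nat.lt_succ_self p, hp⟩, filter_true_of_mem]
  intro x hx
  exact mem_range.1 (hA hx)

lemma prod_wfact_eq (p n : ℕ) (A : Finset ℕ) (hA : A ⊆ range p) :
    ∏ i ∈ range p, wfact n p A i =
      n.descFactorial A.card * ∏ i ∈ (range p) \ A, (A.filter (· < i)).card := by
  have hu : A ∪ (range p \ A) = range p := union_sdiff_of_subset hA
  calc ∏ i ∈ range p, wfact n p A i
      = ∏ i ∈ A ∪ (range p \ A), wfact n p A i := by rw [hu]
    _ = (∏ i ∈ A, wfact n p A i) * ∏ i ∈ range p \ A, wfact n p A i :=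
        prod_union disjoint_sdiff
    _ = n.descFactorial A.card * ∏ i ∈ (range p) \ A, (A.filter (· < i)).card := by
        congr 1
        · rw [← goodProd n A]
          exact prod_congr rfl (fun a ha => wfact_of_mem n p A a ha)
        · refine prod_congr rfl (fun i hi => ?_)
          rw [mem_sdiff, mem_range] at hi
          rw [wfact, if_pos ⟨hi.1, hi.2⟩]

theorem Mcount_formula : ∀ p n k : ℕ, ∀ A : Finset ℕ, A ⊆ range k → k ≤ p → p ≤ n →
    Mcount p n k A = ∏ i ∈ range p, wfact n k A i := by
  intro p
  induction p with
  | zero =>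
    intro n k A hA hk hn
    have hk0 : k = 0 := Nat.le_zero.1 hk
    subst hk0
    have hA0 : A = ∅ := subset_empty.1 (by simpa using hA)
    subst hA0
    have hall : ∀ f : Fin 0 → Fin n, RunCond 0 n 0 ∅ f :=
      fun f => ⟨fun i => i.elim0, fun b hb => absurd hb (Nat.not_lt_zero b)⟩
    haveI : Unique (Fin 0 → Fin n) :=
      ⟨⟨fun i => i.elim0⟩, fun f => funext fun i => i.elim0⟩
    rw [Mcount, Nat.card_congr (Equiv.subtypeUnivEquiv hall)]
    simp
  | succ p ih =>
    intro n k A hA hk hn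
    have hpn : p < n := Nat.lt_of_lt_of_le (Nat.lt_succ_self p) hn
    rcases eq_or_lt_of_le hk with hke | hklt
    · -- k = p + 1
      subst hke
      by_cases hp : p ∈ A
      · rw [Mcount_succ_top_good p n A hA hp hpn,
          ih (n-1) p (A.erase p)
            (fun x hx => mem_range.2 (by
              have h1 := mem_range.1 (hA (mem_of_mem_erase hx))
              have h2 := (mem_erase.1 hx).1
              omega))
            le_rfl (by omega),
          prod_range_succ, wfact_top_good p n A hA hp,
          prod_congr rfl (fun i hi => wfact_goodcase p n A hA hp i (mem_range.1 hi)),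
          mul_comm]
      · -- p ∉ A : split case
        have hA' : A ⊆ range p := by
          intro x hx
          have := mem_range.1 (hA hx)
          rcases eq_or_ne x p with rfl | hne
          · exact absurd hx hp
          · exact mem_range.2 (by omega)
        have hcard : A.card ≤ n := le_trans (card_le_card hA')
          (by simpa using Nat.le_of_succ_le hn)
        have hsplit := Mcount_split p n A hp
        have h1 : Mcount (p+1) n p A = n * ∏ i ∈ range p, wfact n p A i := by
          rw [Mcount_succ_free p n p A hA' le_rfl, ih n p A hA' le_rfl (Nat.le_of_succ_le hn)]
        have h2 : Mcount (p+1) n (p+1) (insert p A) = n * ∏ i ∈ range p, wfact (n-1) p A i := by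
          rw [Mcount_succ_top_good p n (insert p A)
              (insert_subset (mem_range.2 (Nat.lt_succ_self p)) hA)
              (mem_insert_self p A) hpn,
            erase_insert hp, ih (n-1) p A hA' le_rfl (by omega)]
        have key : n * ∏ i ∈ range p, wfact n p A i
            = n * ∏ i ∈ range p, wfact (n-1) p A i
              + A.card * ∏ i ∈ range p, wfact n p A i := by
          rw [prod_wfact_eq p n A hA', prod_wfact_eq p (n-1) A hA']
          have hd := desc_helper n A.card hcard
          set X := ∏ i ∈ (range p) \ A, (A.filter (· < i)).card with hX
          have e1 : n * ((n-1).descFactorial A.card * X)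
              = (n - A.card) * (n.descFactorial A.card * X) := by
            rw [← mul_assoc, hd, mul_assoc]
          rw [e1, ← add_mul, show n - A.card + A.card = n from by omega]
        have hfin : Mcount (p+1) n (p+1) A = A.card * ∏ i ∈ range p, wfact n p A i := by
          omega
        rw [hfin, prod_range_succ, wfact_final p n A hA' hp,
          prod_congr rfl (fun i hi => wfact_lt_agree n p A i (mem_range.1 hi)), mul_comm]

    · -- k ≤ p
      have hkp : k ≤ p := Nat.lt_succ_iff.1 hklt
      rw [Mcount_succ_free p n k A hA hkp, ih n k A hA hkp (Nat.le_of_succ_le hn),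
        prod_range_succ, wfact_top_free n k p A hA hkp, mul_comm]

/-- the set of run starts, as a `Finset ℕ` -/
def rset {n : ℕ} (f : Fin n → Fin n) : Finset ℕ :=
  ((Finset.univ.filter (fun j : Fin n => ∀ i : Fin n, f i = j → j ≤ i)).image Fin.val)

lemma numRuns_eq_card_rset {n : ℕ} (f : Fin n → Fin n) :
    (Finset.univ.filter (fun j : Fin n => ∀ i : Fin n, f i = j → j ≤ i)).card = (rset f).card :=
  (card_image_of_injective _ Fin.val_injective).symm

lemma rset_subset {n : ℕ} (f : Fin n → Fin n) : rset f ⊆ range n := by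
  intro x hx
  obtain ⟨j, -, rfl⟩ := mem_image.1 hx
  exact mem_range.2 j.isLt

lemma mem_rset_iff {n : ℕ} (f : Fin n → Fin n) (j : Fin n) :
    (j : ℕ) ∈ rset f ↔ ∀ i : Fin n, f i = j → j ≤ i := by
  rw [rset, mem_image]
  constructor
  · rintro ⟨j', hj', hval⟩
    have : j' = j := Fin.ext hval
    subst this
    exact (mem_filter.1 hj').2
  · intro h
    exact ⟨j, mem_filter.2 ⟨mem_univ j, h⟩, rfl⟩

lemma runCond_iff_rset {n : ℕ} (A : Finset ℕ) (hA : A ⊆ range n) (f : Fin n → Fin n) :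
    RunCond n n n A f ↔ rset f = A := by
  constructor
  · rintro ⟨h1, h2⟩
    ext j
    constructor
    · intro hj
      have hjn : j < n := mem_range.1 (rset_subset f hj)
      by_contra hjA
      obtain ⟨i, hij, hfi⟩ := h2 j hjn hjA
      have hgood := (mem_rset_iff f ⟨j, hjn⟩).1 hj i (Fin.ext hfi)
      have : j ≤ (i : ℕ) := hgood
      omega
    · intro hjA
      have hjn : j < n := mem_range.1 (hA hjA)
      refine (mem_rset_iff f ⟨j, hjn⟩).2 (fun i hfi => ?_)
      show j ≤ (i : ℕ)
      by_contra hlt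
      exact h1 i j hjA (by omega) (by rw [hfi])
  · rintro rfl
    constructor
    · intro i a ha hia hfa
      have han : a < n := mem_range.1 (rset_subset f ha)
      have := (mem_rset_iff f ⟨a, han⟩).1 ha i (Fin.ext hfa)
      have : a ≤ (i : ℕ) := this
      omega
    · intro b hb hbA
      by_contra hno
      push_neg at hno
      refine hbA ((mem_rset_iff f ⟨b, hb⟩).2 (fun i hfi => ?_))
      show b ≤ (i : ℕ)
      by_contra hlt
      exact absurd (congrArg Fin.val hfi) (by push_neg; exact fun h => (hno i (by omega) h).elim)

lemma count_numRuns_eq (n m : ℕ) :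
    Nat.card {f : Fin n → Fin n // numRuns f = m} =
      ∑ A ∈ (range n).powersetCard m, Mcount n n n A := by
  classical
  rw [ncard_subtype]
  rw [card_eq_sum_card_fiberwise (f := rset)
    (t := (range n).powersetCard m)
    (fun f hf => by
      rw [mem_coe, mem_filter] at hf
      exact mem_powersetCard.2 ⟨rset_subset f, by
        rw [← numRuns_eq_card_rset]; exact hf.2⟩)]
  refine sum_congr rfl (fun A hA => ?_)
  obtain ⟨hAsub, hAcard⟩ := mem_powersetCard.1 hA
  rw [Mcount, ncard_subtype]
  congr 1
  ext f
  simp only [mem_filter, mem_univ, true_and]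
  rw [runCond_iff_rset A hAsub f]
  constructor
  · rintro ⟨-, h⟩
    exact h
  · intro h
    refine ⟨?_, h⟩
    show (Finset.univ.filter (fun j : Fin n => ∀ i : Fin n, f i = j → j ≤ i)).card = m
    rw [numRuns_eq_card_rset, h, hAcard]

/-! ### Part 2: counting finpartitions -/

def GoodMap {n : ℕ} (g : Fin n → Fin n) : Prop :=
  (∀ x, g (g x) = g x) ∧ ∀ x, g x ≤ x

def kerSetoid {n : ℕ} (g : Fin n → Fin n) : Setoid (Fin n) :=
  ⟨fun x y => g x = g y, ⟨fun _ => rfl, Eq.symm, Eq.trans⟩⟩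

instance {n : ℕ} (g : Fin n → Fin n) : DecidableRel (kerSetoid g).r :=
  fun a b => instDecidableEqFin n (g a) (g b)

/-- the root map of a finpartition: each element goes to the minimum of its part. -/
def rootMap {n : ℕ} (P : Finpartition (Finset.univ : Finset (Fin n))) (x : Fin n) : Fin n :=
  (P.part x).min' ⟨x, P.mem_part (mem_univ x)⟩

lemma rootMap_mem_part {n : ℕ} (P : Finpartition (Finset.univ : Finset (Fin n))) (x : Fin n) :
    rootMap P x ∈ P.part x := min'_mem _ _

lemma part_rootMap_eq {n : ℕ} (P : Finpartition (Finset.univ : Finset (Fin n))) (x : Fin n) :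
    P.part (rootMap P x) = P.part x :=
  P.part_eq_of_mem (P.part_mem.2 (mem_univ x)) (rootMap_mem_part P x)

lemma rootMap_goodMap {n : ℕ} (P : Finpartition (Finset.univ : Finset (Fin n))) :
    GoodMap (rootMap P) := by
  constructor
  · intro x
    show (P.part (rootMap P x)).min' _ = _
    simp only [part_rootMap_eq]
    rfl
  · intro x
    exact min'_le _ x (P.mem_part (mem_univ x))

lemma rootMap_eq_iff_part_eq {n : ℕ} (P : Finpartition (Finset.univ : Finset (Fin n)))
    (x y : Fin n) : rootMap P x = rootMap P y ↔ P.part x = P.part y := by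
  constructor
  · intro h
    have h1 : rootMap P x ∈ P.part x := rootMap_mem_part P x
    have h2 : rootMap P x ∈ P.part y := h ▸ rootMap_mem_part P y
    exact P.eq_of_mem_parts (P.part_mem.2 (mem_univ x)) (P.part_mem.2 (mem_univ y)) h1 h2
  · intro h
    show (P.part x).min' _ = (P.part y).min' _
    simp only [h]

lemma card_image_rootMap {n : ℕ} (P : Finpartition (Finset.univ : Finset (Fin n))) :
    ((Finset.univ.image (rootMap P))).card = P.parts.card := by
  have hfix : ∀ a ∈ Finset.univ.image (rootMap P), rootMap P a = a := by
    intro a ha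
    obtain ⟨x, -, rfl⟩ := mem_image.1 ha
    exact (rootMap_goodMap P).1 x
  refine card_bij (fun a _ha => P.part a) ?_ ?_ ?_
  · intro a _
    exact P.part_mem.2 (mem_univ a)
  · intro a ha b hb h
    rw [← hfix a ha, ← hfix b hb]
    exact (rootMap_eq_iff_part_eq P a b).2 h
  · intro t ht
    obtain ⟨x, hx⟩ := P.nonempty_of_mem_parts ht
    refine ⟨rootMap P x, mem_image_of_mem _ (mem_univ x), ?_⟩
    show P.part (rootMap P x) = t
    rw [part_rootMap_eq]
    exact P.part_eq_of_mem ht hx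

/-- the equivalence between finpartitions of `Fin n` and good maps. -/
noncomputable def finpartitionEquivGoodMap (n : ℕ) :
    Finpartition (Finset.univ : Finset (Fin n)) ≃ {g : Fin n → Fin n // GoodMap g} where
  toFun P := ⟨rootMap P, rootMap_goodMap P⟩
  invFun g := Finpartition.ofSetoid (kerSetoid g.1)
  left_inv P := by
    set Q := Finpartition.ofSetoid (kerSetoid (rootMap P)) with hQ
    have hpart : ∀ x, Q.part x = P.part x := by
      intro x
      ext b
      rw [hQ, Finpartition.mem_part_ofSetoid_iff_rel]
      show rootMap P x = rootMap P b ↔ _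
      rw [rootMap_eq_iff_part_eq]
      constructor
      · intro h
        exact h ▸ P.mem_part (mem_univ b)
      · intro h
        exact (P.part_eq_of_mem (P.part_mem.2 (mem_univ x)) h).symm
    -- two finpartitions with equal parts
    have : Q.parts = P.parts := by
      ext t
      constructor
      · intro ht
        obtain ⟨x, hx⟩ := Q.nonempty_of_mem_parts ht
        rw [← Q.part_eq_of_mem ht hx, hpart]
        exact P.part_mem.2 (mem_univ x)
      · intro ht
        obtain ⟨x, hx⟩ := P.nonempty_of_mem_parts ht
        rw [← P.part_eq_of_mem ht hx, ← hpart]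
        exact Q.part_mem.2 (mem_univ x)
    exact Finpartition.ext this
  right_inv g := by
    apply Subtype.ext
    funext x
    have hmem : g.1 x ∈ (Finpartition.ofSetoid (kerSetoid g.1)).part x := by
      rw [Finpartition.mem_part_ofSetoid_iff_rel]
      exact (g.2.1 x).symm
    show rootMap (Finpartition.ofSetoid (kerSetoid g.1)) x = g.1 x
    refine le_antisymm (min'_le _ _ hmem) (le_min' _ _ _ ?_)
    intro y hy
    rw [Finpartition.mem_part_ofSetoid_iff_rel] at hy
    calc g.1 x = g.1 y := hy
      _ ≤ y := g.2.2 y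

lemma goodMap_image_iff {n : ℕ} (B : Finset (Fin n)) (g : Fin n → Fin n) :
    (GoodMap g ∧ Finset.univ.image g = B) ↔
      ((∀ a ∈ B, g a = a) ∧ ∀ b, b ∉ B → (g b ∈ B ∧ g b < b)) := by
  constructor
  · rintro ⟨⟨hidem, hle⟩, rfl⟩
    constructor
    · intro a ha
      obtain ⟨x, -, rfl⟩ := mem_image.1 ha
      exact hidem x
    · intro b hb
      refine ⟨mem_image_of_mem _ (mem_univ b), lt_of_le_of_ne (hle b) ?_⟩
      intro h
      exact hb (h ▸ mem_image_of_mem _ (mem_univ b))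
  · rintro ⟨hfix, hmove⟩
    have himg : Finset.univ.image g = B := by
      ext a
      constructor
      · intro ha
        obtain ⟨x, -, rfl⟩ := mem_image.1 ha
        by_cases hx : x ∈ B
        · rw [hfix x hx]; exact hx
        · exact (hmove x hx).1
      · intro ha
        rw [← hfix a ha]
        exact mem_image_of_mem _ (mem_univ a)
    refine ⟨⟨?_, ?_⟩, himg⟩
    · intro x
      by_cases hx : x ∈ B
      · rw [hfix x hx]
        exact hfix x hx
      · exact hfix _ (hmove x hx).1
    · intro x
      by_cases hx : x ∈ B
      · rw [hfix x hx]
      · exact le_of_lt (hmove x hx).2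

def rootEquivPi {n : ℕ} (B : Finset (Fin n)) :
    {g : Fin n → Fin n // (∀ a ∈ B, g a = a) ∧ ∀ b, b ∉ B → (g b ∈ B ∧ g b < b)} ≃
      (∀ b : {x : Fin n // x ∉ B}, {a : Fin n // a ∈ B ∧ a < b.1}) where
  toFun g b := ⟨g.1 b.1, g.2.2 b.1 b.2⟩
  invFun r := ⟨fun x => if hx : x ∈ B then x else (r ⟨x, hx⟩).1,
    ⟨fun a ha => dif_pos ha, fun b hb => by
      simp only [dif_neg hb]
      exact (r ⟨b, hb⟩).2⟩⟩
  left_inv g := by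
    apply Subtype.ext
    funext x
    by_cases hx : x ∈ B
    · simp only [dif_pos hx]
      exact (g.2.1 x hx).symm
    · simp only [dif_neg hx]
  right_inv r := by
    funext b
    apply Subtype.ext
    simp only [dif_neg b.2]

lemma pi_choice_card {n : ℕ} (B : Finset (Fin n)) (c : Fin n) :
    Nat.card {a : Fin n // a ∈ B ∧ a < c} = ((B.filter (· < c)).card) := by
  classical
  rw [ncard_subtype]
  congr 1
  ext a
  simp only [mem_filter, mem_univ, true_and]

lemma count_goodMap_fiber {n : ℕ} (B : Finset (Fin n)) :
    Nat.card {g : Fin n → Fin n // GoodMap g ∧ Finset.univ.image g = B} =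
      ∏ b ∈ Finset.univ \ B, ((B.filter (· < b)).card) := by
  classical
  rw [Nat.card_congr ((Equiv.subtypeEquivRight (goodMap_image_iff B)).trans (rootEquivPi B)),
    Nat.card_pi]
  calc ∏ a : {x : Fin n // x ∉ B}, Nat.card {a' : Fin n // a' ∈ B ∧ a' < (a : Fin n)}
      = ∏ a : {x : Fin n // x ∉ B}, ((B.filter (· < (a : Fin n))).card) :=
        Finset.prod_congr rfl (fun a _ => pi_choice_card B a)
    _ = ∏ b ∈ Finset.univ \ B, ((B.filter (· < b)).card) :=
        (Finset.prod_subtype (Finset.univ \ B) (fun x => by simp)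
          (fun c : Fin n => ((B.filter (· < c)).card))).symm

lemma stirling_eq_sum (n m : ℕ) :
    Nat.card {P : Finpartition (Finset.univ : Finset (Fin n)) // P.parts.card = m}
      = ∑ B ∈ (Finset.univ : Finset (Fin n)).powersetCard m,
          ∏ b ∈ Finset.univ \ B, ((B.filter (· < b)).card) := by
  classical
  have e1 : {P : Finpartition (Finset.univ : Finset (Fin n)) // P.parts.card = m} ≃
      {g : Fin n → Fin n // GoodMap g ∧ (Finset.univ.image g).card = m} :=
    (Equiv.subtypeEquiv (finpartitionEquivGoodMap n)
      (fun P => by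
        rw [← card_image_rootMap P]
        rfl)).trans (Equiv.subtypeSubtypeEquivSubtypeInter _ _)
  rw [Nat.card_congr e1, ncard_subtype]
  rw [card_eq_sum_card_fiberwise (f := fun g => Finset.univ.image g)
    (t := (Finset.univ : Finset (Fin n)).powersetCard m)
    (fun g hg => by
      rw [mem_coe, mem_filter] at hg
      exact mem_powersetCard.2 ⟨subset_univ _, hg.2.2⟩)]
  refine sum_congr rfl (fun B hB => ?_)
  obtain ⟨hBsub, hBcard⟩ := mem_powersetCard.1 hB
  rw [← count_goodMap_fiber B, ncard_subtype]
  congr 1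
  ext g
  simp only [mem_filter, mem_univ, true_and]
  constructor
  · rintro ⟨⟨h1, -⟩, h2⟩
    exact ⟨h1, h2⟩
  · rintro ⟨h1, h2⟩
    exact ⟨⟨h1, h2 ▸ hBcard⟩, h2⟩

lemma sum_reindex (n m : ℕ) :
    ∑ B ∈ (Finset.univ : Finset (Fin n)).powersetCard m,
        ∏ b ∈ Finset.univ \ B, ((B.filter (· < b)).card)
      = ∑ A ∈ (range n).powersetCard m, ∏ b ∈ range n \ A, ((A.filter (· < b)).card) := by
  classical
  refine sum_bij (fun B _ => B.image Fin.val) ?_ ?_ ?_ ?_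
  · intro B hB
    obtain ⟨-, hcard⟩ := mem_powersetCard.1 hB
    refine mem_powersetCard.2 ⟨?_, ?_⟩
    · intro x hx
      obtain ⟨j, -, rfl⟩ := mem_image.1 hx
      exact mem_range.2 j.isLt
    · rw [card_image_of_injective _ Fin.val_injective, hcard]
  · intro B1 h1 B2 h2 h
    exact Finset.image_injective Fin.val_injective h
  · intro A hA
    obtain ⟨hsub, hcard⟩ := mem_powersetCard.1 hA
    refine ⟨Finset.univ.filter (fun x : Fin n => (x : ℕ) ∈ A), mem_powersetCard.2
      ⟨subset_univ _, ?_⟩, ?_⟩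
    · rw [show (Finset.univ.filter (fun x : Fin n => (x : ℕ) ∈ A)).card
        = ((Finset.univ.filter (fun x : Fin n => (x : ℕ) ∈ A)).image Fin.val).card from
        (card_image_of_injective _ Fin.val_injective).symm]
      rw [show (Finset.univ.filter (fun x : Fin n => (x : ℕ) ∈ A)).image Fin.val = A from ?_]
      · exact hcard
      · ext a
        simp only [mem_image, mem_filter, mem_univ, true_and]
        constructor
        · rintro ⟨x, hx, rfl⟩
          exact hx
        · intro ha
          exact ⟨⟨a, mem_range.1 (hsub ha)⟩, ha, rfl⟩
    · ext a
      simp only [mem_image, mem_filter, mem_univ, true_and]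
      constructor
      · rintro ⟨x, hx, rfl⟩
        exact hx
      · intro ha
        exact ⟨⟨a, mem_range.1 (hsub ha)⟩, ha, rfl⟩
  · intro B hB
    refine prod_bij (fun b _ => (b : ℕ)) ?_ ?_ ?_ ?_
    · intro b hb
      rw [mem_sdiff] at hb
      rw [mem_sdiff, mem_range]
      refine ⟨b.isLt, ?_⟩
      intro hmem
      obtain ⟨x, hx, hval⟩ := mem_image.1 hmem
      exact hb.2 ((Fin.val_injective hval) ▸ hx)
    · intro b1 h1 b2 h2 h
      exact Fin.val_injective h
    · intro c hc
      rw [mem_sdiff, mem_range] at hc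
      refine ⟨⟨c, hc.1⟩, ?_, rfl⟩
      rw [mem_sdiff]
      refine ⟨mem_univ _, fun hmem => hc.2 ?_⟩
      exact mem_image_of_mem Fin.val hmem
    · intro b hb
      rw [show (B.image Fin.val).filter (· < (b : ℕ)) = (B.filter (· < b)).image Fin.val from ?_,
        card_image_of_injective _ Fin.val_injective]
      ext c
      simp only [mem_filter, mem_image]
      constructor
      · rintro ⟨⟨x, hx, rfl⟩, hlt⟩
        exact ⟨x, ⟨hx, hlt⟩, rfl⟩
      · rintro ⟨x, ⟨hx, hlt⟩, rfl⟩
        exact ⟨⟨x, hx, rfl⟩, hlt⟩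

lemma part1_final (n m : ℕ) :
    Nat.card {f : Fin n → Fin n // numRuns f = m}
      = n.descFactorial m * ∑ A ∈ (range n).powersetCard m,
          ∏ b ∈ range n \ A, ((A.filter (· < b)).card) := by
  rw [count_numRuns_eq, mul_sum]
  refine sum_congr rfl (fun A hA => ?_)
  obtain ⟨hsub, hcard⟩ := mem_powersetCard.1 hA
  rw [Mcount_formula n n n A hsub le_rfl le_rfl, prod_wfact_eq n n A hsub, hcard]

end RunsAux

/-- The number of `n`-mappings with exactly `m` ascending runs is the falling
factorial `n^{\underline{m}}` times the Stirling number `S(n,m)`,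
which also equals `(n!/(n-m)!) · S(n,m)`. -/
theorem mappingRunCount_eq_descFactorial_mul_stirling (n m : ℕ) (hn : 1 ≤ n) (hm : 1 ≤ m) :
    mappingRunCount n m = n.descFactorial m * stirlingSecond n m ∧
    mappingRunCount n m = (Nat.factorial n / Nat.factorial (n - m)) * stirlingSecond n m := by
  have h1 : mappingRunCount n m = n.descFactorial m * stirlingSecond n m := by
    rw [mappingRunCount, RunsAux.part1_final, stirlingSecond, RunsAux.stirling_eq_sum,
      RunsAux.sum_reindex]
  refine ⟨h1, ?_⟩
  by_cases hmn : m ≤ n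
  · rw [h1, Nat.descFactorial_eq_div hmn]
  · have hs : stirlingSecond n m = 0 := by
      rw [stirlingSecond, RunsAux.stirling_eq_sum,
        Finset.powersetCard_eq_empty.2 (by simpa using Nat.lt_of_not_le hmn),
        Finset.sum_empty]
    rw [h1, hs, mul_zero, mul_zero]
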